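/- Every 5 points in the plane in general position contain 4 points in convex position. -/

import Mathlib

/-- Signed area determinant: positive iff `c` is to the left of the directed line `a → b`. -/
def det2 (a b c : ℝ × ℝ) : ℝ :=
  (b.1 - a.1) * (c.2 - a.2) - (b.2 - a.2) * (c.1 - a.1)

/-- A planar point set is in general position if no three of its points are collinear. -/
def GenPos (S : Set (ℝ × ℝ)) : Prop :=
  ∀ p ∈ S, ∀ q ∈ S, ∀ r ∈ S, p ≠ q → p ≠ r → q ≠ r →
    ¬ Collinear ℝ ({p, q, r} : Set (ℝ × ℝ))

/-- A planar point set is in convex position if every point is a vertex of the convex hull,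
i.e. no point lies in the convex hull of the others. -/
def ConvexPos (S : Set (ℝ × ℝ)) : Prop :=
  ∀ p ∈ S, p ∉ convexHull ℝ (S \ {p})

lemma det2_self₁ (p q : ℝ × ℝ) : det2 p q p = 0 := by simp [det2]
lemma det2_self₂ (p q : ℝ × ℝ) : det2 p q q = 0 := by simp [det2]; ring
lemma det2_cyc (a b c : ℝ × ℝ) : det2 a b c = det2 b c a := by simp [det2]; ring
lemma det2_swap (a b c : ℝ × ℝ) : det2 a b c = - det2 b a c := by simp [det2]; ring

lemma det2_comb (p q a b c : ℝ × ℝ) {α β γ : ℝ} (h : α + β + γ = 1) :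
    det2 p q (α • a + β • b + γ • c) =
      α * det2 p q a + β * det2 p q b + γ * det2 p q c := by
  have hγ : γ = 1 - α - β := by linarith
  subst hγ
  simp [det2, Prod.fst_add, Prod.snd_add, Prod.smul_fst, Prod.smul_snd, smul_eq_mul]
  ring

lemma mem_hull3 {a b c x : ℝ × ℝ} :
    x ∈ convexHull ℝ ({a, b, c} : Set (ℝ × ℝ)) ↔
      ∃ α β γ : ℝ, 0 ≤ α ∧ 0 ≤ β ∧ 0 ≤ γ ∧ α + β + γ = 1 ∧ x = α • a + β • b + γ • c := by
  constructor
  · intro hx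
    rw [show ({a, b, c} : Set (ℝ × ℝ)) = insert a {b, c} from rfl,
      convexHull_insert ⟨b, by simp⟩] at hx
    rw [convexHull_pair, mem_convexJoin] at hx
    obtain ⟨a', ha', z, hz, hxz⟩ := hx
    rw [Set.mem_singleton_iff] at ha'
    subst ha'
    rw [segment_eq_image₂] at hz hxz
    obtain ⟨⟨s, t⟩, ⟨hs, ht, hst⟩, rfl⟩ := hz
    obtain ⟨⟨pp, qq⟩, ⟨hpp, hqq, hpq⟩, rfl⟩ := hxz
    refine ⟨pp, qq * s, qq * t, hpp, by positivity, by positivity, by nlinarith, ?_⟩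
    simp only [smul_add, smul_smul, add_assoc]
  · rintro ⟨α, β, γ, hα, hβ, hγ, hsum, rfl⟩
    exact mem_convexHull_of_exists_fintype (ι := Fin 3)
      (![α, β, γ]) (![a, b, c])
      (fun i => by fin_cases i <;> assumption)
      (by simp [Fin.sum_univ_three, hsum])
      (fun i => by fin_cases i <;> simp)
      (by simp [Fin.sum_univ_three])

lemma collinear_of_det2_eq_zero {p q r : ℝ × ℝ} (hpq : p ≠ q) (h : det2 p q r = 0) :
    Collinear ℝ ({p, q, r} : Set (ℝ × ℝ)) := by
  rw [collinear_iff_of_mem (Set.mem_insert p {q, r})]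
  refine ⟨q - p, ?_⟩
  rintro x (rfl | rfl | rfl)
  · exact ⟨0, by simp⟩
  · exact ⟨1, by simp⟩
  · have hne : q.1 - p.1 ≠ 0 ∨ q.2 - p.2 ≠ 0 := by
      by_contra hc
      push_neg at hc
      exact hpq (Prod.ext (by linarith [hc.1]) (by linarith [hc.2]))
    unfold det2 at h
    rcases hne with h1 | h2
    · refine ⟨(x.1 - p.1) / (q.1 - p.1), ?_⟩
      have e1 : x.1 = (x.1 - p.1) / (q.1 - p.1) * (q.1 - p.1) + p.1 := by field_simp; ring
      have e2 : x.2 = (x.1 - p.1) / (q.1 - p.1) * (q.2 - p.2) + p.2 := by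
        field_simp
        nlinarith [h]
      exact Prod.ext (by simpa using e1) (by simpa using e2)
    · refine ⟨(x.2 - p.2) / (q.2 - p.2), ?_⟩
      have e1 : x.1 = (x.2 - p.2) / (q.2 - p.2) * (q.1 - p.1) + p.1 := by
        field_simp
        nlinarith [h]
      have e2 : x.2 = (x.2 - p.2) / (q.2 - p.2) * (q.2 - p.2) + p.2 := by field_simp; ring
      exact Prod.ext (by simpa using e1) (by simpa using e2)

lemma convexPos4 {a b c d : ℝ × ℝ} (hab : a ≠ b) (hac : a ≠ c) (had : a ≠ d)
    (hbc : b ≠ c) (hbd : b ≠ d) (hcd : c ≠ d)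
    (h1 : a ∉ convexHull ℝ ({b, c, d} : Set (ℝ × ℝ)))
    (h2 : b ∉ convexHull ℝ ({a, c, d} : Set (ℝ × ℝ)))
    (h3 : c ∉ convexHull ℝ ({a, b, d} : Set (ℝ × ℝ)))
    (h4 : d ∉ convexHull ℝ ({a, b, c} : Set (ℝ × ℝ))) :
    ConvexPos ({a, b, c, d} : Set (ℝ × ℝ)) := by
  intro x hx
  rcases hx with rfl | rfl | rfl | rfl
  · have e : ({x, b, c, d} : Set (ℝ × ℝ)) \ {x} = {b, c, d} := by
      ext y
      simp only [Set.mem_diff, Set.mem_insert_iff, Set.mem_singleton_iff]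
      constructor
      · rintro ⟨rfl | rfl | rfl | rfl, hy⟩ <;> tauto
      · rintro (rfl | rfl | rfl) <;> exact ⟨by tauto, by tauto⟩
    rw [e]; exact h1
  · have e : ({a, x, c, d} : Set (ℝ × ℝ)) \ {x} = {a, c, d} := by
      ext y
      simp only [Set.mem_diff, Set.mem_insert_iff, Set.mem_singleton_iff]
      constructor
      · rintro ⟨rfl | rfl | rfl | rfl, hy⟩ <;> tauto
      · rintro (rfl | rfl | rfl) <;> exact ⟨by tauto, by tauto⟩
    rw [e]; exact h2
  · have e : ({a, b, x, d} : Set (ℝ × ℝ)) \ {x} = {a, b, d} := by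
      ext y
      simp only [Set.mem_diff, Set.mem_insert_iff, Set.mem_singleton_iff]
      constructor
      · rintro ⟨rfl | rfl | rfl | rfl, hy⟩ <;> tauto
      · rintro (rfl | rfl | rfl) <;> exact ⟨by tauto, by tauto⟩
    rw [e]; exact h3
  · have e : ({a, b, c, x} : Set (ℝ × ℝ)) \ {x} = {a, b, c} := by
      ext y
      simp only [Set.mem_diff, Set.mem_insert_iff, Set.mem_singleton_iff]
      constructor
      · rintro ⟨rfl | rfl | rfl | rfl, hy⟩ <;> tauto
      · rintro (rfl | rfl | rfl) <;> exact ⟨by tauto, by tauto⟩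
    rw [e]; exact h4

lemma quadPos {u v w p q : ℝ × ℝ}
    (hpq : p ≠ q) (hpu : p ≠ u) (hpv : p ≠ v) (hqu : q ≠ u) (hqv : q ≠ v) (huv : u ≠ v)
    (hu : 0 < det2 p q u) (hv : 0 < det2 p q v)
    (huvw : det2 u v w ≠ 0)
    (hp : p ∈ convexHull ℝ ({u, v, w} : Set (ℝ × ℝ)))
    (hq : q ∈ convexHull ℝ ({u, v, w} : Set (ℝ × ℝ))) :
    ConvexPos ({u, v, p, q} : Set (ℝ × ℝ)) := by
  obtain ⟨a1, a2, a3, ha1, ha2, ha3, has, hpe⟩ := mem_hull3.mp hp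
  obtain ⟨b1, b2, b3, hb1, hb2, hb3, hbs, hqe⟩ := mem_hull3.mp hq
  have hgu : det2 v w u ≠ 0 := by rw [← det2_cyc]; exact huvw
  have hgv : det2 u w v ≠ 0 := by
    have e : det2 u w v = - det2 u v w := by simp [det2]; ring
    rw [e]; exact neg_ne_zero.mpr huvw
  have ep1 : det2 v w p = a1 * det2 v w u := by
    have h := det2_comb v w u v w has
    rw [← hpe] at h
    simpa [det2_self₁, det2_self₂] using h
  have eq1 : det2 v w q = b1 * det2 v w u := by
    have h := det2_comb v w u v w hbs
    rw [← hqe] at h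
    simpa [det2_self₁, det2_self₂] using h
  have ep2 : det2 u w p = a2 * det2 u w v := by
    have h := det2_comb u w u v w has
    rw [← hpe] at h
    simpa [det2_self₁, det2_self₂] using h
  have eq2 : det2 u w q = b2 * det2 u w v := by
    have h := det2_comb u w u v w hbs
    rw [← hqe] at h
    simpa [det2_self₁, det2_self₂] using h
  have h1 : u ∉ convexHull ℝ ({v, p, q} : Set (ℝ × ℝ)) := by
    intro hm
    obtain ⟨β, γ, δ, hβ, hγ, hδ, hs, hue⟩ := mem_hull3.mp hm
    have ef : det2 p q u = β * det2 p q v := by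
      have h := det2_comb p q v p q hs
      rw [← hue] at h
      simpa [det2_self₁, det2_self₂] using h
    have hβ0 : 0 < β := by nlinarith [ef, hu, hv]
    have eg : det2 v w u = γ * det2 v w p + δ * det2 v w q := by
      have h := det2_comb v w v p q hs
      rw [← hue] at h
      simpa [det2_self₁, det2_self₂] using h
    rw [ep1, eq1] at eg
    have key : γ * a1 + δ * b1 = 1 := by
      have h2 : det2 v w u * (γ * a1 + δ * b1 - 1) = 0 := by linear_combination -eg
      rcases mul_eq_zero.mp h2 with h | h
      · exact absurd h hgu
      · linarith
    nlinarith [mul_nonneg hγ (sub_nonneg.mpr (show a1 ≤ 1 by linarith)),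
      mul_nonneg hδ (sub_nonneg.mpr (show b1 ≤ 1 by linarith))]
  have h2 : v ∉ convexHull ℝ ({u, p, q} : Set (ℝ × ℝ)) := by
    intro hm
    obtain ⟨β, γ, δ, hβ, hγ, hδ, hs, hve⟩ := mem_hull3.mp hm
    have ef : det2 p q v = β * det2 p q u := by
      have h := det2_comb p q u p q hs
      rw [← hve] at h
      simpa [det2_self₁, det2_self₂] using h
    have hβ0 : 0 < β := by nlinarith [ef, hu, hv]
    have eg : det2 u w v = γ * det2 u w p + δ * det2 u w q := by
      have h := det2_comb u w u p q hs
      rw [← hve] at h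
      simpa [det2_self₁, det2_self₂] using h
    rw [ep2, eq2] at eg
    have key : γ * a2 + δ * b2 = 1 := by
      have h2 : det2 u w v * (γ * a2 + δ * b2 - 1) = 0 := by linear_combination -eg
      rcases mul_eq_zero.mp h2 with h | h
      · exact absurd h hgv
      · linarith
    nlinarith [mul_nonneg hγ (sub_nonneg.mpr (show a2 ≤ 1 by linarith)),
      mul_nonneg hδ (sub_nonneg.mpr (show b2 ≤ 1 by linarith))]
  have h3 : p ∉ convexHull ℝ ({u, v, q} : Set (ℝ × ℝ)) := by
    intro hm
    obtain ⟨α, β, δ, hα, hβ, hδ, hs, hpe'⟩ := mem_hull3.mp hm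
    have ef : (0 : ℝ) = α * det2 p q u + β * det2 p q v := by
      have h := det2_comb p q u v q hs
      rw [← hpe'] at h
      simpa [det2_self₁, det2_self₂] using h
    have hα0 : α = 0 := by nlinarith
    have hβ0 : β = 0 := by nlinarith
    have hδ1 : δ = 1 := by linarith
    rw [hα0, hβ0, hδ1] at hpe'
    simp at hpe'
    exact hpq hpe'
  have h4 : q ∉ convexHull ℝ ({u, v, p} : Set (ℝ × ℝ)) := by
    intro hm
    obtain ⟨α, β, δ, hα, hβ, hδ, hs, hqe'⟩ := mem_hull3.mp hm
    have ef : (0 : ℝ) = α * det2 p q u + β * det2 p q v := by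
      have h := det2_comb p q u v p hs
      rw [← hqe'] at h
      simpa [det2_self₁, det2_self₂] using h
    have hα0 : α = 0 := by nlinarith
    have hβ0 : β = 0 := by nlinarith
    have hδ1 : δ = 1 := by linarith
    rw [hα0, hβ0, hδ1] at hqe'
    simp at hqe'
    exact hpq hqe'.symm
  exact convexPos4 huv hpu.symm hqu.symm hpv.symm hqv.symm hpq h1 h2 h3 h4

lemma set3_eq_132 (a b c : ℝ × ℝ) : ({a, b, c} : Set (ℝ × ℝ)) = {a, c, b} := by
  ext y; simp; tauto

lemma set3_eq_231 (a b c : ℝ × ℝ) : ({a, b, c} : Set (ℝ × ℝ)) = {b, c, a} := by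
  ext y; simp; tauto

set_option maxHeartbeats 1000000 in
lemma two_inside {u v w p q : ℝ × ℝ}
    (huv : u ≠ v) (huw : u ≠ w) (hvw : v ≠ w)
    (hpu : p ≠ u) (hpv : p ≠ v) (hpw : p ≠ w)
    (hqu : q ≠ u) (hqv : q ≠ v) (hqw : q ≠ w) (hpq : p ≠ q)
    (dU : det2 p q u ≠ 0) (dV : det2 p q v ≠ 0) (dW : det2 p q w ≠ 0)
    (dT : det2 u v w ≠ 0)
    (hp : p ∈ convexHull ℝ ({u, v, w} : Set (ℝ × ℝ)))
    (hq : q ∈ convexHull ℝ ({u, v, w} : Set (ℝ × ℝ))) :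
    ∃ x y : ℝ × ℝ, x ∈ ({u, v, w} : Set (ℝ × ℝ)) ∧ y ∈ ({u, v, w} : Set (ℝ × ℝ)) ∧
      x ≠ y ∧ ConvexPos ({x, y, p, q} : Set (ℝ × ℝ)) := by
  have nswapU : det2 q p u = - det2 p q u := by simp [det2]; ring
  have nswapV : det2 q p v = - det2 p q v := by simp [det2]; ring
  have nswapW : det2 q p w = - det2 p q w := by simp [det2]; ring
  have dT' : det2 u w v ≠ 0 := by
    have e : det2 u w v = - det2 u v w := by simp [det2]; ring
    rw [e]; exact neg_ne_zero.mpr dT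
  have dT'' : det2 v w u ≠ 0 := by rw [← det2_cyc]; exact dT
  have hpvw : p ∈ convexHull ℝ ({u, w, v} : Set (ℝ × ℝ)) := by rwa [← set3_eq_132]
  have hqvw : q ∈ convexHull ℝ ({u, w, v} : Set (ℝ × ℝ)) := by rwa [← set3_eq_132]
  have hpwu : p ∈ convexHull ℝ ({v, w, u} : Set (ℝ × ℝ)) := by rwa [← set3_eq_231]
  have hqwu : q ∈ convexHull ℝ ({v, w, u} : Set (ℝ × ℝ)) := by rwa [← set3_eq_231]
  rcases dU.lt_or_gt with hU | hU <;> rcases dV.lt_or_gt with hV | hV <;>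
    rcases dW.lt_or_gt with hW | hW
  -- (---)
  · refine ⟨u, v, by simp, by simp, huv, ?_⟩
    have c := quadPos hpq.symm hqu hqv hpu hpv huv
      (by rw [nswapU]; linarith) (by rw [nswapV]; linarith) dT hq hp
    have e : ({u, v, q, p} : Set (ℝ × ℝ)) = {u, v, p, q} := by ext y; simp; tauto
    rwa [e] at c
  -- (--+)
  · refine ⟨u, v, by simp, by simp, huv, ?_⟩
    have c := quadPos hpq.symm hqu hqv hpu hpv huv
      (by rw [nswapU]; linarith) (by rw [nswapV]; linarith) dT hq hp
    have e : ({u, v, q, p} : Set (ℝ × ℝ)) = {u, v, p, q} := by ext y; simp; tauto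
    rwa [e] at c
  -- (-+-) : u,w negative
  · refine ⟨u, w, by simp, by simp, huw, ?_⟩
    have c := quadPos hpq.symm hqu hqw hpu hpw huw
      (by rw [nswapU]; linarith) (by rw [nswapW]; linarith) dT' hqvw hpvw
    have e : ({u, w, q, p} : Set (ℝ × ℝ)) = {u, w, p, q} := by ext y; simp; tauto
    rwa [e] at c
  -- (-++) : v,w positive
  · exact ⟨v, w, by simp, by simp, hvw,
      quadPos hpq hpv hpw hqv hqw hvw hV hW dT'' hpwu hqwu⟩
  -- (+--) : v,w negative
  · refine ⟨v, w, by simp, by simp, hvw, ?_⟩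
    have c := quadPos hpq.symm hqv hqw hpv hpw hvw
      (by rw [nswapV]; linarith) (by rw [nswapW]; linarith) dT'' hqwu hpwu
    have e : ({v, w, q, p} : Set (ℝ × ℝ)) = {v, w, p, q} := by ext y; simp; tauto
    rwa [e] at c
  -- (+-+) : u,w positive
  · exact ⟨u, w, by simp, by simp, huw,
      quadPos hpq hpu hpw hqu hqw huw hU hW dT' hpvw hqvw⟩
  -- (++-)
  · exact ⟨u, v, by simp, by simp, huv,
      quadPos hpq hpu hpv hqu hqv huv hU hV dT hp hq⟩
  -- (+++)
  · exact ⟨u, v, by simp, by simp, huv,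
      quadPos hpq hpu hpv hqu hqv huv hU hV dT hp hq⟩

lemma finset4 {a b c d : ℝ × ℝ} {T : Set (ℝ × ℝ)}
    (ha : a ∈ T) (hb : b ∈ T) (hc : c ∈ T) (hd : d ∈ T)
    (hab : a ≠ b) (hac : a ≠ c) (had : a ≠ d) (hbc : b ≠ c) (hbd : b ≠ d) (hcd : c ≠ d)
    (h : ConvexPos ({a, b, c, d} : Set (ℝ × ℝ))) :
    ∃ S : Finset (ℝ × ℝ), ↑S ⊆ T ∧ S.card = 4 ∧ ConvexPos (S : Set (ℝ × ℝ)) := by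
  classical
  refine ⟨{a, b, c, d}, ?_, ?_, ?_⟩
  · intro x hx
    simp only [Finset.coe_insert, Finset.coe_singleton, Set.mem_insert_iff,
      Set.mem_singleton_iff] at hx
    rcases hx with rfl | rfl | rfl | rfl <;> assumption
  · rw [Finset.card_insert_of_notMem (by simp [hab, hac, had]),
      Finset.card_insert_of_notMem (by simp [hbc, hbd]),
      Finset.card_insert_of_notMem (by simp [hcd]), Finset.card_singleton]
  · have e : (({a, b, c, d} : Finset (ℝ × ℝ)) : Set (ℝ × ℝ)) = {a, b, c, d} := by simp
    rw [e]; exact h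

set_option maxHeartbeats 1000000 in
lemma stage2 {T : Set (ℝ × ℝ)} {s t u w z : ℝ × ℝ}
    (hsT : s ∈ T) (htT : t ∈ T) (huT : u ∈ T) (hwT : w ∈ T) (hzT : z ∈ T)
    (hst : s ≠ t) (hsu : s ≠ u) (hsw : s ≠ w) (hsz : s ≠ z)
    (htu : t ≠ u) (htw : t ≠ w) (htz : t ≠ z)
    (huw : u ≠ w) (huz : u ≠ z) (hwz : w ≠ z)
    (hd : ∀ p ∈ T, ∀ q ∈ T, ∀ r ∈ T, p ≠ q → p ≠ r → q ≠ r → det2 p q r ≠ 0)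
    (hw : w ∈ convexHull ℝ ({s, t, u} : Set (ℝ × ℝ))) :
    ∃ S : Finset (ℝ × ℝ), ↑S ⊆ T ∧ S.card = 4 ∧ ConvexPos (S : Set (ℝ × ℝ)) := by
  by_cases hz : z ∈ convexHull ℝ ({s, t, u} : Set (ℝ × ℝ))
  · obtain ⟨x, y, hx, hy, hxy, hc⟩ := two_inside hst hsu htu hsw.symm htw.symm huw.symm
      hsz.symm htz.symm huz.symm hwz
      (hd w hwT z hzT s hsT hwz hsw.symm hsz.symm)
      (hd w hwT z hzT t htT hwz htw.symm htz.symm)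
      (hd w hwT z hzT u huT hwz huw.symm huz.symm)
      (hd s hsT t htT u huT hst hsu htu) hw hz
    simp only [Set.mem_insert_iff, Set.mem_singleton_iff] at hx hy
    have hxT : x ∈ T := by rcases hx with rfl | rfl | rfl <;> assumption
    have hyT : y ∈ T := by rcases hy with rfl | rfl | rfl <;> assumption
    have hxw : x ≠ w := by rcases hx with rfl | rfl | rfl <;> assumption
    have hxz : x ≠ z := by rcases hx with rfl | rfl | rfl <;> assumption
    have hyw : y ≠ w := by rcases hy with rfl | rfl | rfl <;> assumption
    have hyz : y ≠ z := by rcases hy with rfl | rfl | rfl <;> assumption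
    exact finset4 hxT hyT hwT hzT hxy hxw hxz hyw hyz hwz hc
  by_cases h1 : s ∈ convexHull ℝ ({t, u, z} : Set (ℝ × ℝ))
  · have mono : convexHull ℝ ({s, t, u} : Set (ℝ × ℝ)) ⊆
        convexHull ℝ ({t, u, z} : Set (ℝ × ℝ)) := by
      apply convexHull_min _ (convex_convexHull ℝ _)
      rintro x (rfl | rfl | rfl)
      · exact h1
      · exact subset_convexHull ℝ _ (by simp)
      · exact subset_convexHull ℝ _ (by simp)
    obtain ⟨x, y, hx, hy, hxy, hc⟩ := two_inside htu htz huz hst hsu hsz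
      htw.symm huw.symm hwz hsw
      (hd s hsT w hwT t htT hsw hst htw.symm)
      (hd s hsT w hwT u huT hsw hsu huw.symm)
      (hd s hsT w hwT z hzT hsw hsz hwz)
      (hd t htT u huT z hzT htu htz huz) h1 (mono hw)
    simp only [Set.mem_insert_iff, Set.mem_singleton_iff] at hx hy
    have hxT : x ∈ T := by rcases hx with rfl | rfl | rfl <;> assumption
    have hyT : y ∈ T := by rcases hy with rfl | rfl | rfl <;> assumption
    have hxs : x ≠ s := by rcases hx with rfl | rfl | rfl; exacts [hst.symm, hsu.symm, hsz.symm]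
    have hxw : x ≠ w := by rcases hx with rfl | rfl | rfl; exacts [htw, huw, hwz.symm]
    have hys : y ≠ s := by rcases hy with rfl | rfl | rfl; exacts [hst.symm, hsu.symm, hsz.symm]
    have hyw : y ≠ w := by rcases hy with rfl | rfl | rfl; exacts [htw, huw, hwz.symm]
    exact finset4 hxT hyT hsT hwT hxy hxs hxw hys hyw hsw hc
  by_cases h2 : t ∈ convexHull ℝ ({s, u, z} : Set (ℝ × ℝ))
  · have mono : convexHull ℝ ({s, t, u} : Set (ℝ × ℝ)) ⊆
        convexHull ℝ ({s, u, z} : Set (ℝ × ℝ)) := by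
      apply convexHull_min _ (convex_convexHull ℝ _)
      rintro x (rfl | rfl | rfl)
      · exact subset_convexHull ℝ _ (by simp)
      · exact h2
      · exact subset_convexHull ℝ _ (by simp)
    obtain ⟨x, y, hx, hy, hxy, hc⟩ := two_inside hsu hsz huz hst.symm htu htz
      hsw.symm huw.symm hwz htw
      (hd t htT w hwT s hsT htw hst.symm hsw.symm)
      (hd t htT w hwT u huT htw htu huw.symm)
      (hd t htT w hwT z hzT htw htz hwz)
      (hd s hsT u huT z hzT hsu hsz huz) h2 (mono hw)
    simp only [Set.mem_insert_iff, Set.mem_singleton_iff] at hx hy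
    have hxT : x ∈ T := by rcases hx with rfl | rfl | rfl <;> assumption
    have hyT : y ∈ T := by rcases hy with rfl | rfl | rfl <;> assumption
    have hxt : x ≠ t := by rcases hx with rfl | rfl | rfl; exacts [hst, htu.symm, htz.symm]
    have hxw : x ≠ w := by rcases hx with rfl | rfl | rfl; exacts [hsw, huw, hwz.symm]
    have hyt : y ≠ t := by rcases hy with rfl | rfl | rfl; exacts [hst, htu.symm, htz.symm]
    have hyw : y ≠ w := by rcases hy with rfl | rfl | rfl; exacts [hsw, huw, hwz.symm]
    exact finset4 hxT hyT htT hwT hxy hxt hxw hyt hyw htw hc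
  by_cases h3 : u ∈ convexHull ℝ ({s, t, z} : Set (ℝ × ℝ))
  · have mono : convexHull ℝ ({s, t, u} : Set (ℝ × ℝ)) ⊆
        convexHull ℝ ({s, t, z} : Set (ℝ × ℝ)) := by
      apply convexHull_min _ (convex_convexHull ℝ _)
      rintro x (rfl | rfl | rfl)
      · exact subset_convexHull ℝ _ (by simp)
      · exact subset_convexHull ℝ _ (by simp)
      · exact h3
    obtain ⟨x, y, hx, hy, hxy, hc⟩ := two_inside hst hsz htz hsu.symm htu.symm huz
      hsw.symm htw.symm hwz huw
      (hd u huT w hwT s hsT huw hsu.symm hsw.symm)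
      (hd u huT w hwT t htT huw htu.symm htw.symm)
      (hd u huT w hwT z hzT huw huz hwz)
      (hd s hsT t htT z hzT hst hsz htz) h3 (mono hw)
    simp only [Set.mem_insert_iff, Set.mem_singleton_iff] at hx hy
    have hxT : x ∈ T := by rcases hx with rfl | rfl | rfl <;> assumption
    have hyT : y ∈ T := by rcases hy with rfl | rfl | rfl <;> assumption
    have hxu : x ≠ u := by rcases hx with rfl | rfl | rfl; exacts [hsu, htu, huz.symm]
    have hxw : x ≠ w := by rcases hx with rfl | rfl | rfl; exacts [hsw, htw, hwz.symm]
    have hyu : y ≠ u := by rcases hy with rfl | rfl | rfl; exacts [hsu, htu, huz.symm]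
    have hyw : y ≠ w := by rcases hy with rfl | rfl | rfl; exacts [hsw, htw, hwz.symm]
    exact finset4 hxT hyT huT hwT hxy hxu hxw hyu hyw huw hc
  · exact finset4 hsT htT huT hzT hst hsu hsz htu htz huz
      (convexPos4 hst hsu hsz htu htz huz h1 h2 h3 hz)

lemma main5 {T : Set (ℝ × ℝ)} {p1 p2 p3 p4 p5 : ℝ × ℝ}
    (h1T : p1 ∈ T) (h2T : p2 ∈ T) (h3T : p3 ∈ T) (h4T : p4 ∈ T) (h5T : p5 ∈ T)
    (h12 : p1 ≠ p2) (h13 : p1 ≠ p3) (h14 : p1 ≠ p4) (h15 : p1 ≠ p5)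
    (h23 : p2 ≠ p3) (h24 : p2 ≠ p4) (h25 : p2 ≠ p5)
    (h34 : p3 ≠ p4) (h35 : p3 ≠ p5) (h45 : p4 ≠ p5)
    (hd : ∀ p ∈ T, ∀ q ∈ T, ∀ r ∈ T, p ≠ q → p ≠ r → q ≠ r → det2 p q r ≠ 0) :
    ∃ S : Finset (ℝ × ℝ), ↑S ⊆ T ∧ S.card = 4 ∧ ConvexPos (S : Set (ℝ × ℝ)) := by
  by_cases h4 : p4 ∈ convexHull ℝ ({p1, p2, p3} : Set (ℝ × ℝ))
  · exact stage2 h1T h2T h3T h4T h5T h12 h13 h14 h15 h23 h24 h25 h34 h35 h45 hd h4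
  by_cases h1 : p1 ∈ convexHull ℝ ({p2, p3, p4} : Set (ℝ × ℝ))
  · exact stage2 h2T h3T h4T h1T h5T h23 h24 h12.symm h25 h34 h13.symm h35
      h14.symm h45 h15 hd h1
  by_cases h2 : p2 ∈ convexHull ℝ ({p1, p3, p4} : Set (ℝ × ℝ))
  · exact stage2 h1T h3T h4T h2T h5T h13 h14 h12 h15 h34 h23.symm h35
      h24.symm h45 h25 hd h2
  by_cases h3 : p3 ∈ convexHull ℝ ({p1, p2, p4} : Set (ℝ × ℝ))
  · exact stage2 h1T h2T h4T h3T h5T h12 h14 h13 h15 h24 h23 h25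
      h34.symm h45 h35 hd h3
  · exact finset4 h1T h2T h3T h4T h12 h13 h14 h23 h24 h34
      (convexPos4 h12 h13 h14 h23 h24 h34 h1 h2 h3 h4)


/-- Any 5 points in general position contain 4 points in convex position. -/
theorem stmt_19 (P : Finset (ℝ × ℝ)) (hcard : P.card = 5)
    (hgp : GenPos (P : Set (ℝ × ℝ))) :
    ∃ S ⊆ P, S.card = 4 ∧ ConvexPos (S : Set (ℝ × ℝ)) := by
  classical
  have hd : ∀ p ∈ (P : Set (ℝ × ℝ)), ∀ q ∈ (P : Set (ℝ × ℝ)), ∀ r ∈ (P : Set (ℝ × ℝ)),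
      p ≠ q → p ≠ r → q ≠ r → det2 p q r ≠ 0 := by
    intro p hp q hq r hr hpq hpr hqr h0
    exact hgp p hp q hq r hr hpq hpr hqr (collinear_of_det2_eq_zero hpq h0)
  rw [show (5 : ℕ) = 4 + 1 from rfl, Finset.card_eq_succ] at hcard
  obtain ⟨a, t, hat, rfl, ht⟩ := hcard
  rw [show (4 : ℕ) = 3 + 1 from rfl, Finset.card_eq_succ] at ht
  obtain ⟨b, r, hbr, rfl, hr⟩ := ht
  rw [Finset.card_eq_three] at hr
  obtain ⟨x, y, z, hxy, hxz, hyz, rfl⟩ := hr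
  simp only [Finset.mem_insert, Finset.mem_singleton, not_or] at hat hbr
  obtain ⟨hab, hax, hay, haz⟩ := hat
  obtain ⟨hbx, hby, hbz⟩ := hbr
  obtain ⟨S, hsub, hc4, hcp⟩ := main5 (T := (↑(insert a (insert b ({x, y, z} : Finset (ℝ × ℝ)))) : Set (ℝ × ℝ)))
    (p1 := a) (p2 := b) (p3 := x) (p4 := y) (p5 := z)
    (by simp) (by simp) (by simp) (by simp) (by simp)
    hab hax hay haz hbx hby hbz hxy hxz hyz hd
  exact ⟨S, Finset.coe_subset.mp hsub, hc4, hcp⟩
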